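/- Let ψ : ℝ → ℝ be twice continuously differentiable with ψ''(s) + ψ'(s) − 2ψ(s) + ψ(s)³ = 0 for all s ∈ ℝ, and suppose ψ(s) → 0 and ψ'(s) → 0 as s → +∞. Then for every s ∈ ℝ the function ρ ↦ ψ'(ρ)² is integrable on [s,∞) and ∫_{s}^{∞} ψ'(ρ)² dρ = (1/2)·ψ'(s)² − ψ(s)² + (1/4)·ψ(s)⁴. -/

import Mathlib

open Set MeasureTheory Filter

/-- Energy identity for the autonomous ODE ψ'' + ψ' − 2ψ + ψ³ = 0. -/
theorem cubic_autonomous_energy_identity (ψ : ℝ → ℝ) (hψ : ContDiff ℝ 2 ψ)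
    (heq : ∀ s : ℝ, deriv (deriv ψ) s + deriv ψ s - 2 * ψ s + (ψ s) ^ 3 = 0)
    (hlim : Tendsto ψ atTop (nhds 0))
    (hlim' : Tendsto (deriv ψ) atTop (nhds 0)) :
    ∀ s : ℝ,
      IntegrableOn (fun ρ => (deriv ψ ρ) ^ 2) (Ici s) ∧
      ∫ ρ in Ici s, (deriv ψ ρ) ^ 2 =
        (1 / 2) * (deriv ψ s) ^ 2 - (ψ s) ^ 2 + (1 / 4) * (ψ s) ^ 4 := by
  have hψd : Differentiable ℝ ψ := hψ.differentiable (by norm_num)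
  have hψ' : ContDiff ℝ 1 (deriv ψ) := by
    have h2 := contDiff_succ_iff_deriv (n := 1) (f := ψ) (𝕜 := ℝ)
    rw [show ((1 : WithTop ℕ∞) + 1) = 2 by norm_num] at h2
    exact (h2.mp hψ).2.2
  have hψ'd : Differentiable ℝ (deriv ψ) := hψ'.differentiable (by norm_num)
  set g : ℝ → ℝ := fun x => -((1 / 2) * (deriv ψ x) ^ 2 - (ψ x) ^ 2 + (1 / 4) * (ψ x) ^ 4)
    with hg
  have hderiv : ∀ x : ℝ, HasDerivAt g ((deriv ψ x) ^ 2) x := by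
    intro x
    have h1 : HasDerivAt ψ (deriv ψ x) x := (hψd x).hasDerivAt
    have h2 : HasDerivAt (deriv ψ) (deriv (deriv ψ) x) x := (hψ'd x).hasDerivAt
    have h3 := ((((h2.pow 2).const_mul (1 / 2 : ℝ)).sub (h1.pow 2)).add
      ((h1.pow 4).const_mul (1 / 4 : ℝ))).neg
    refine h3.congr_deriv (Eq.symm ?_)
    push_cast
    linear_combination (deriv ψ x) * heq x
  have hgcont : Continuous g := by
    have : Continuous (deriv ψ) := hψ'.continuous
    fun_prop
  have hglim : Tendsto g atTop (nhds 0) := by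
    have h := (((hlim'.pow 2).const_mul (1 / 2 : ℝ)).sub (hlim.pow 2)).add
      ((hlim.pow 4).const_mul (1 / 4 : ℝ)) |>.neg
    rw [hg]
    convert h using 2
    norm_num
  intro s
  have hd : ∀ x ∈ Ioi s, HasDerivAt g ((fun x => (deriv ψ x) ^ 2) x) x := fun x _ => hderiv x
  have hpos : ∀ x ∈ Ioi s, 0 ≤ (fun x => (deriv ψ x) ^ 2) x := fun x _ => sq_nonneg _
  have hint : IntegrableOn (fun x => (deriv ψ x) ^ 2) (Ioi s) :=
    integrableOn_Ioi_deriv_of_nonneg hgcont.continuousWithinAt hd hpos hglim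
  have key : ∫ x in Ioi s, (deriv ψ x) ^ 2 = 0 - g s :=
    integral_Ioi_of_hasDerivAt_of_nonneg hgcont.continuousWithinAt hd hpos hglim
  constructor
  · rw [integrableOn_Ici_iff_integrableOn_Ioi]
    exact hint
  · rw [integral_Ici_eq_integral_Ioi, key, hg]
    ring
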